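/- Consider a maximal forward solution of the shooting system with admissible initial data that is defined for all ρ ≥ 0. Then liminf_{ρ→∞} κ(ρ) ≥ 1 and ζ(ρ) → 0 as ρ → ∞. If furthermore U(ρ) → 0 as ρ → ∞, then κ(ρ) → 1 as ρ → ∞. -/

import Mathlib

open Filter Topology Set Real

noncomputable section

/-- The initial energy `E₀ = 1 + 2U₀² − (1 − w₀²)²/r₀²`. -/
def initialEnergy (r₀ w₀ U₀ : ℝ) : ℝ := 1 + 2 * U₀ ^ 2 - (1 - w₀ ^ 2) ^ 2 / r₀ ^ 2

/-- Admissible initial data `(r₀, w₀, U₀)`: `r₀ > 0`, `|w₀| ≤ 1`, `E₀ ≥ 0`. -/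
def Admissible (r₀ w₀ U₀ : ℝ) : Prop :=
  0 < r₀ ∧ |w₀| ≤ 1 ∧ 0 ≤ initialEnergy r₀ w₀ U₀

/-- The forward domain `[0, ρmax) ⊆ ℝ`, for `ρmax ∈ (0, ∞]`. -/
def fwdDom (ρmax : EReal) : Set ℝ := {ρ : ℝ | 0 ≤ ρ ∧ (ρ : EReal) < ρmax}

/-- `(r, N, w, U, κ, ζ)` solves the shooting system on `[0, ρmax)` with
initial data `(r₀, w₀, U₀)` (and `N(0) = κ(0) = 0`, `ζ(0) = √E₀`),
together with the constraint. -/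
structure IsShootingSolOn (r₀ w₀ U₀ : ℝ) (ρmax : EReal)
    (r N w U κ ζ : ℝ → ℝ) : Prop where
  init_r : r 0 = r₀
  init_N : N 0 = 0
  init_w : w 0 = w₀
  init_U : U 0 = U₀
  init_κ : κ 0 = 0
  init_ζ : ζ 0 = Real.sqrt (initialEnergy r₀ w₀ U₀)
  r_pos : ∀ ρ ∈ fwdDom ρmax, 0 < r ρ
  ode_r : ∀ ρ ∈ fwdDom ρmax, HasDerivWithinAt r (r ρ * N ρ) (fwdDom ρmax) ρ
  ode_N : ∀ ρ ∈ fwdDom ρmax,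
      HasDerivWithinAt N (1 - (1 - w ρ ^ 2) ^ 2 / r ρ ^ 2 - κ ρ * N ρ) (fwdDom ρmax) ρ
  ode_w : ∀ ρ ∈ fwdDom ρmax, HasDerivWithinAt w (r ρ * U ρ) (fwdDom ρmax) ρ
  ode_U : ∀ ρ ∈ fwdDom ρmax,
      HasDerivWithinAt U (-(κ ρ - N ρ) * U ρ - w ρ * (1 - w ρ ^ 2) / r ρ) (fwdDom ρmax) ρ
  ode_κ : ∀ ρ ∈ fwdDom ρmax, HasDerivWithinAt κ (1 + 2 * U ρ ^ 2 - κ ρ ^ 2) (fwdDom ρmax) ρ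
  ode_ζ : ∀ ρ ∈ fwdDom ρmax, HasDerivWithinAt ζ (-(κ ρ) * ζ ρ) (fwdDom ρmax) ρ
  constraint : ∀ ρ ∈ fwdDom ρmax,
      ζ ρ ^ 2 = 1 + 2 * U ρ ^ 2 - (1 - w ρ ^ 2) ^ 2 / r ρ ^ 2 - 2 * κ ρ * N ρ + N ρ ^ 2

/-- A maximal forward solution: a solution on `[0, ρmax)` such that no solution with the
same initial data exists on a strictly larger forward interval. -/
def IsMaximalShootingSol (r₀ w₀ U₀ : ℝ) (ρmax : EReal)
    (r N w U κ ζ : ℝ → ℝ) : Prop :=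
  0 < ρmax ∧ IsShootingSolOn r₀ w₀ U₀ ρmax r N w U κ ζ ∧
    ∀ ρmax' : EReal, ρmax < ρmax' →
      ¬ ∃ r' N' w' U' κ' ζ' : ℝ → ℝ, IsShootingSolOn r₀ w₀ U₀ ρmax' r' N' w' U' κ' ζ'

/-- The set of zeros of `w` in `(0, ρmax)`. -/
def zerosOf (w : ℝ → ℝ) (ρmax : EReal) : Set ℝ :=
  {ρ : ℝ | 0 < ρ ∧ (ρ : EReal) < ρmax ∧ w ρ = 0}

/-- Singular orbit: the solution exists only up to a finite point `ρm`, at which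
`r → 0`, `N → −∞`, while `w, U, κ, ζ` remain bounded. -/
def SingularSol (ρmax : EReal) (r N w U κ ζ : ℝ → ℝ) : Prop :=
  ∃ ρm : ℝ, ρmax = (ρm : EReal) ∧ 0 < ρm ∧
    Tendsto r (𝓝[<] ρm) (𝓝 0) ∧ Tendsto N (𝓝[<] ρm) atBot ∧
    ∃ C : ℝ, ∀ ρ ∈ fwdDom ρmax, |w ρ| ≤ C ∧ |U ρ| ≤ C ∧ |κ ρ| ≤ C ∧ |ζ ρ| ≤ C

/-- Escaping singular orbit: singular, `w` leaves the strip `|w| ≤ 1`, and `w` has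
exactly `n` zeros for `ρ > 0`. -/
def EscapingSol (n : ℕ) (ρmax : EReal) (r N w U κ ζ : ℝ → ℝ) : Prop :=
  SingularSol ρmax r N w U κ ζ ∧ (∃ ρ ∈ fwdDom ρmax, 1 < |w ρ|) ∧
    (zerosOf w ρmax).Finite ∧ (zerosOf w ρmax).ncard = n

/-- Crashing singular orbit: singular with `|w| ≤ 1` on the whole domain. -/
def CrashingSol (ρmax : EReal) (r N w U κ ζ : ℝ → ℝ) : Prop :=
  SingularSol ρmax r N w U κ ζ ∧ ∀ ρ ∈ fwdDom ρmax, |w ρ| ≤ 1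

/-- Oscillatory orbit: global, with `(w, w') = (w, rU) → (0, 0)` as `ρ → ∞`. -/
def OscillatorySol (ρmax : EReal) (r N w U κ ζ : ℝ → ℝ) : Prop :=
  ρmax = ⊤ ∧ Tendsto w atTop (𝓝 0) ∧ Tendsto (fun ρ => r ρ * U ρ) atTop (𝓝 0)

/-- Regular orbit: global, with `(|w|, w') → (1, 0)` as `ρ → ∞`, and `w` has exactly
`n` zeros for `ρ > 0`. -/
def RegularSol (n : ℕ) (ρmax : EReal) (r N w U κ ζ : ℝ → ℝ) : Prop :=
  ρmax = ⊤ ∧ Tendsto (fun ρ => |w ρ|) atTop (𝓝 1) ∧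
    Tendsto (fun ρ => r ρ * U ρ) atTop (𝓝 0) ∧
    (zerosOf w ρmax).Finite ∧ (zerosOf w ρmax).ncard = n

/-- Initial data whose (unique) maximal orbit is escaping singular with `n` zeros of `w`. -/
def InE (n : ℕ) (r₀ w₀ U₀ : ℝ) : Prop :=
  Admissible r₀ w₀ U₀ ∧ ∃ (ρmax : EReal) (r N w U κ ζ : ℝ → ℝ),
    IsMaximalShootingSol r₀ w₀ U₀ ρmax r N w U κ ζ ∧ EscapingSol n ρmax r N w U κ ζ

/-- Initial data whose maximal orbit is crashing singular. -/
def InC (r₀ w₀ U₀ : ℝ) : Prop :=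
  Admissible r₀ w₀ U₀ ∧ ∃ (ρmax : EReal) (r N w U κ ζ : ℝ → ℝ),
    IsMaximalShootingSol r₀ w₀ U₀ ρmax r N w U κ ζ ∧ CrashingSol ρmax r N w U κ ζ

/-- Initial data whose maximal orbit is oscillatory. -/
def InO (r₀ w₀ U₀ : ℝ) : Prop :=
  Admissible r₀ w₀ U₀ ∧ ∃ (ρmax : EReal) (r N w U κ ζ : ℝ → ℝ),
    IsMaximalShootingSol r₀ w₀ U₀ ρmax r N w U κ ζ ∧ OscillatorySol ρmax r N w U κ ζ

/-- Initial data whose maximal orbit is regular with `n` zeros of `w`. -/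
def InR (n : ℕ) (r₀ w₀ U₀ : ℝ) : Prop :=
  Admissible r₀ w₀ U₀ ∧ ∃ (ρmax : EReal) (r N w U κ ζ : ℝ → ℝ),
    IsMaximalShootingSol r₀ w₀ U₀ ρmax r N w U κ ζ ∧ RegularSol n ρmax r N w U κ ζ


/-- Right-comparison wrapper: if `f` has right derivatives on `[0, ∞)`, `B` is differentiable,
`f a ≤ B a` and `f' < B'` at any contact point past `a ≥ 0`, then `f ≤ B` on `[a, ∞)`. -/
lemma comp_below {f f' B B' : ℝ → ℝ} {a : ℝ} (ha : 0 ≤ a)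
    (hf : ∀ x ∈ Set.Ici (0:ℝ), HasDerivWithinAt f (f' x) (Set.Ici (0:ℝ)) x)
    (hB : ∀ x, HasDerivAt B (B' x) x)
    (hab : f a ≤ B a)
    (bound : ∀ x, a ≤ x → f x = B x → f' x < B' x) :
    ∀ x, a ≤ x → f x ≤ B x := by
  intro x hx
  have hsub : Set.Icc a x ⊆ Set.Ici (0:ℝ) := fun y hy => le_trans ha hy.1
  have hcont : ContinuousOn f (Set.Icc a x) :=
    fun y hy => ((hf y (hsub hy)).continuousWithinAt).mono hsub
  exact image_le_of_deriv_right_lt_deriv_boundary hcont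
    (fun y hy => (hf y (le_trans ha hy.1)).mono (fun z hz => le_trans (le_trans ha hy.1) hz))
    hab hB (fun y hy h => bound y hy.1 h) ⟨hx, le_refl x⟩

lemma fwdDom_top : fwdDom ⊤ = Set.Ici (0:ℝ) := by
  ext ρ; simp [fwdDom, EReal.coe_lt_top]

/-- Lower comparison: `κ ρ ≥ 1 - exp(-ρ/2)` for all `ρ ≥ 0`. -/
lemma kappa_lower (κ U : ℝ → ℝ) (hκ0 : κ 0 = 0)
    (hκ : ∀ x ∈ Set.Ici (0:ℝ),
      HasDerivWithinAt κ (1 + 2 * U x ^ 2 - κ x ^ 2) (Set.Ici (0:ℝ)) x) :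
    ∀ x, 0 ≤ x → 1 - Real.exp (-x/2) ≤ κ x := by
  intro x hx
  have key := comp_below (f := fun y => -κ y)
      (f' := fun y => -(1 + 2 * U y ^ 2 - κ y ^ 2))
      (B := fun y => Real.exp (-y/2) - 1)
      (B' := fun y => Real.exp (-y/2) * (-1/2))
      (a := 0) le_rfl
      (fun y hy => (hκ y hy).neg)
      (fun y => (((hasDerivAt_id y).neg.div_const 2).exp).sub_const 1)
      (by simp [hκ0])
      ?_ x hx
  · linarith [key]
  · intro y hy h
    have hE1 : Real.exp (-y/2) ≤ 1 := by
      rw [Real.exp_le_one_iff]; linarith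
    have hE0 : 0 < Real.exp (-y/2) := Real.exp_pos _
    have hκy : κ y = 1 - Real.exp (-y/2) := by
      have := h; linarith
    rw [hκy]
    nlinarith [sq_nonneg (U y)]

/-- If the solution is global, then `liminf κ ≥ 1` and `ζ → 0` at infinity;
if moreover `U → 0`, then `κ → 1`. -/
theorem kappa_liminf_and_zeta_limit (r₀ w₀ U₀ : ℝ) (hadm : Admissible r₀ w₀ U₀)
    (ρmax : EReal) (r N w U κ ζ : ℝ → ℝ)
    (hsol : IsMaximalShootingSol r₀ w₀ U₀ ρmax r N w U κ ζ)
    (hglob : ρmax = ⊤) :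
    (∀ ε : ℝ, 0 < ε → ∀ᶠ ρ in atTop, 1 - ε < κ ρ) ∧
    Tendsto ζ atTop (𝓝 0) ∧
    (Tendsto U atTop (𝓝 0) → Tendsto κ atTop (𝓝 1)) := by
  subst hglob
  obtain ⟨hpos, hS, hmax⟩ := hsol
  have hκ : ∀ x ∈ Set.Ici (0:ℝ),
      HasDerivWithinAt κ (1 + 2 * U x ^ 2 - κ x ^ 2) (Set.Ici (0:ℝ)) x := by
    have := hS.ode_κ; rwa [fwdDom_top] at this
  have hζ : ∀ x ∈ Set.Ici (0:ℝ),
      HasDerivWithinAt ζ (-(κ x) * ζ x) (Set.Ici (0:ℝ)) x := by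
    have := hS.ode_ζ; rwa [fwdDom_top] at this
  have hlow : ∀ x, 0 ≤ x → 1 - Real.exp (-x/2) ≤ κ x := kappa_lower κ U hS.init_κ hκ
  have hexp : Tendsto (fun ρ : ℝ => Real.exp (-ρ/2)) atTop (𝓝 0) := by
    have h1 : Tendsto (fun ρ : ℝ => ρ/2) atTop atTop :=
      tendsto_id.atTop_div_const two_pos
    have h0 := Real.tendsto_exp_neg_atTop_nhds_zero.comp h1
    refine h0.congr fun ρ => ?_
    simp [Function.comp, neg_div]
  have hpart1 : ∀ ε : ℝ, 0 < ε → ∀ᶠ ρ in atTop, 1 - ε < κ ρ := by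
    intro ε hε
    filter_upwards [hexp.eventually_lt_const hε, eventually_ge_atTop 0] with ρ h1 h2
    have := hlow ρ h2
    linarith
  have hhalf : ∀ ρ : ℝ, 2 ≤ ρ → 1/2 < κ ρ := by
    intro ρ hρ
    have h1 := hlow ρ (by linarith)
    have h2 : Real.exp (-ρ/2) ≤ Real.exp (-1) := Real.exp_le_exp.mpr (by linarith)
    have hprod : Real.exp (-1) * Real.exp 1 = 1 := by
      rw [← Real.exp_add]; norm_num
    nlinarith [Real.exp_pos (-1 : ℝ), Real.exp_one_gt_d9]
  refine ⟨hpart1, ?_, ?_⟩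
  · -- ζ → 0
    have hg : ∀ x ∈ Set.Ici (0:ℝ),
        HasDerivWithinAt (fun ρ => ζ ρ ^ 2) (2 * ζ x * (-(κ x) * ζ x)) (Set.Ici (0:ℝ)) x := by
      intro x hx
      have := (hζ x hx).fun_pow 2
      simpa using this
    have hbd : ∀ x, 2 ≤ x → ζ x ^ 2 ≤ (ζ 2 ^ 2 + 1) * Real.exp (-(x - 2)) := by
      refine comp_below (a := 2) (by norm_num) hg
        (fun y => ((((hasDerivAt_id y).sub_const 2).neg).exp).const_mul (ζ 2 ^ 2 + 1))
        (by norm_num) ?_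
      intro y hy h
      simp only [id_eq, Pi.neg_apply] at h ⊢
      have hE : 0 < Real.exp (-(y - 2)) := Real.exp_pos _
      have hκy := hhalf y hy
      have hzpos : 0 < ζ y ^ 2 := by nlinarith [sq_nonneg (ζ 2)]
      nlinarith [h, mul_pos hzpos (show (0:ℝ) < 2 * κ y - 1 by linarith)]
    have htend : Tendsto (fun x : ℝ => (ζ 2 ^ 2 + 1) * Real.exp (-(x - 2))) atTop (𝓝 0) := by
      have h1 : Tendsto (fun x : ℝ => x - 2) atTop atTop :=
        tendsto_atTop_add_const_right atTop (-2) tendsto_id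
      have h2 := Real.tendsto_exp_neg_atTop_nhds_zero.comp h1
      have h3 := h2.const_mul (ζ 2 ^ 2 + 1)
      simpa [Function.comp] using h3
    have hsq : Tendsto (fun x => ζ x ^ 2) atTop (𝓝 0) := by
      refine tendsto_of_tendsto_of_tendsto_of_le_of_le' tendsto_const_nhds htend
        (Eventually.of_forall fun x => sq_nonneg _) ?_
      filter_upwards [eventually_ge_atTop 2] with x hx using hbd x hx
    have habs : Tendsto (fun x => |ζ x|) atTop (𝓝 0) := by
      have h5 := (Real.continuous_sqrt.tendsto' 0 0 (by simp)).comp hsq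
      refine h5.congr fun x => ?_
      simp [Function.comp, Real.sqrt_sq_eq_abs]
    have hneg : Tendsto (fun x => -|ζ x|) atTop (𝓝 0) := by
      simpa using habs.neg
    exact tendsto_of_tendsto_of_tendsto_of_le_of_le' hneg habs
      (Eventually.of_forall fun x => neg_abs_le _)
      (Eventually.of_forall fun x => le_abs_self _)
  · -- U → 0 ⇒ κ → 1
    intro hU
    rw [Metric.tendsto_nhds]
    intro ε hε
    have hU2 : Tendsto (fun ρ => 2 * U ρ ^ 2) atTop (𝓝 0) := by
      have h1 := (hU.mul hU).const_mul (2:ℝ)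
      simpa [pow_two] using h1
    obtain ⟨ρ₀, hρ₀⟩ := eventually_atTop.mp (hU2.eventually_lt_const hε)
    set ρ₁ : ℝ := max ρ₀ 0 with hρ₁def
    have hρ₁0 : (0:ℝ) ≤ ρ₁ := le_max_right _ _
    have hUsm : ∀ ρ, ρ₁ ≤ ρ → 2 * U ρ ^ 2 < ε := fun ρ hρ =>
      hρ₀ ρ (le_trans (le_max_left _ _) hρ)
    set m : ℝ := Real.sqrt (1 + ε) with hmdef
    have hmsq : m ^ 2 = 1 + ε := Real.sq_sqrt (by linarith)
    have hm0 : 0 ≤ m := Real.sqrt_nonneg _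
    have hm1 : 1 ≤ m := by nlinarith
    have hm' : m ≤ 1 + ε/2 := by nlinarith
    set C : ℝ := |κ ρ₁ - m| + 1 with hCdef
    have hCpos : 0 < C := by positivity
    have hupper : ∀ x, ρ₁ ≤ x → κ x ≤ m + C * Real.exp (-(x - ρ₁)) := by
      refine comp_below (a := ρ₁) hρ₁0 hκ
        (fun y => (((((hasDerivAt_id y).sub_const ρ₁).neg).exp).const_mul C).const_add m)
        ?_ ?_
      · have h1 := le_abs_self (κ ρ₁ - m)
        simp only [sub_self, neg_zero, Real.exp_zero, mul_one]
        linarith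
      · intro y hy h
        simp only [id_eq, Pi.neg_apply] at h ⊢
        have hE : 0 < Real.exp (-(y - ρ₁)) := Real.exp_pos _
        have hCE : 0 < C * Real.exp (-(y - ρ₁)) := by positivity
        have hUy := hUsm y hy
        have hκ2 : κ y ^ 2 = (m + C * Real.exp (-(y - ρ₁))) ^ 2 := by rw [h]
        nlinarith [hκ2, hUy, hmsq,
          mul_pos hCE (show (0:ℝ) < 2 * m + C * Real.exp (-(y - ρ₁)) - 1 by linarith)]
    have htendB : Tendsto (fun x : ℝ => C * Real.exp (-(x - ρ₁))) atTop (𝓝 0) := by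
      have h1 : Tendsto (fun x : ℝ => x - ρ₁) atTop atTop :=
        tendsto_atTop_add_const_right atTop (-ρ₁) tendsto_id
      have h2 := (Real.tendsto_exp_neg_atTop_nhds_zero.comp h1).const_mul C
      simpa [Function.comp] using h2
    filter_upwards [hpart1 ε hε, eventually_ge_atTop ρ₁,
      htendB.eventually_lt_const (half_pos hε)] with ρ h1 h2 h3
    rw [Real.dist_eq, abs_lt]
    have h4 := hupper ρ h2
    constructor
    · linarith
    · nlinarith [h4, h3, hm']
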